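/- Let R, S be finite digraphs and D' a class of finite digraphs. Then R ⊑_Γ S with respect to D' if and only if #Θ_{G,R}(ξ) ≤ #Θ_{G,S}(ξ) for every G ∈ D' and every ξ ∈ H(G,R). -/
import Mathlib


/-- A homomorphism between digraphs `(V, A)` and `(W, B)`:
a map sending every arc to an arc. -/
def IsHom {V W : Type} (A : V → V → Prop) (B : W → W → Prop) (f : V → W) : Prop :=
  ∀ ⦃v w : V⦄, A v w → B (f v) (f w)

/-- A strict homomorphism: a homomorphism mapping proper arcs to proper arcs. -/
def IsStrictHom {V W : Type} (A : V → V → Prop) (B : W → W → Prop) (f : V → W) : Prop :=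
  IsHom A B f ∧ ∀ ⦃v w : V⦄, A v w → v ≠ w → f v ≠ f w

/-- Adjacency in a digraph. -/
def DAdj {V : Type} (A : V → V → Prop) (v w : V) : Prop := A v w ∨ A w v

/-- `v` and `w` are connected in `X`: `v = w` (with `v ∈ X`), or there is a line
`z 0, …, z I` inside `X` connecting them, consecutive members being adjacent. -/
def ConnIn {V : Type} (A : V → V → Prop) (X : Set V) (v w : V) : Prop :=
  ∃ (I : ℕ) (z : ℕ → V), z 0 = v ∧ z I = w ∧ (∀ i ≤ I, z i ∈ X) ∧
    ∀ i < I, DAdj A (z i) (z (i + 1))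

/-- `γ_X(v)`: the set of `w ∈ X` connected with `v` in `X`. -/
def gammaSet {V : Type} (A : V → V → Prop) (X : Set V) (v : V) : Set V :=
  {w | ConnIn A X v w}

/-- `Γ_ξ(v)`: the connectivity component of `v` in the preimage `ξ⁻¹(ξ(v))`. -/
def GammaComp {V W : Type} (A : V → V → Prop) (ξ : V → W) (v : V) : Set V :=
  gammaSet A {u | ξ u = ξ v} v

/-- The set of homomorphisms `H(G,H)` (as a type). -/
def HomSet {V W : Type} (A : V → V → Prop) (B : W → W → Prop) : Type :=
  {f : V → W // IsHom A B f}

/-- The set of strict homomorphisms `S(G,H)` (as a type). -/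
def StrictHomSet {V W : Type} (A : V → V → Prop) (B : W → W → Prop) : Type :=
  {f : V → W // IsStrictHom A B f}

/-- The vertex set of the digraph `G_ξ`: the components `Γ_ξ(v)`, `v ∈ V(G)`. -/
def GVert {V W : Type} (A : V → V → Prop) (ξ : V → W) : Type :=
  {C : Set V // ∃ v, C = GammaComp A ξ v}

/-- The arc relation of the digraph `G_ξ`. -/
def GArc {V W : Type} (A : V → V → Prop) (ξ : V → W) :
    GVert A ξ → GVert A ξ → Prop :=
  fun C D => ∃ a ∈ C.1, ∃ b ∈ D.1, A a b

/-- The canonical map `π_ξ : G → G_ξ`, `v ↦ Γ_ξ(v)`. -/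
def piMap {V W : Type} (A : V → V → Prop) (ξ : V → W) (v : V) : GVert A ξ :=
  ⟨GammaComp A ξ v, v, rfl⟩

/-- `Θ_{G,H'}(ξ)`: the homomorphisms `ζ : G → H'` with `G_ζ = G_ξ`
(equality of the digraphs `G_ζ` and `G_ξ`, i.e. of their vertex sets,
which determines the arc sets). -/
def ThetaSet {V W W' : Type} (A : V → V → Prop) (B' : W' → W' → Prop)
    (ξ : V → W) : Set (V → W') :=
  {ζ | IsHom A B' ζ ∧
    {C : Set V | ∃ v, C = GammaComp A ζ v} = {C : Set V | ∃ v, C = GammaComp A ξ v}}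

/-- `R ⊑_Γ S` with respect to a class `D'` of finite digraphs: a strong Γ-scheme
from `R` to `S` exists, i.e. for every finite digraph `G ∈ D'` an injective map
`ρ_G : H(G,R) → H(G,S)` with `Γ_{ρ_G(ξ)}(v) = Γ_ξ(v)` for all `ξ`, `v`. -/
def SqGamma (D' : (V : Type) → (V → V → Prop) → Prop)
    {VR VS : Type} (R : VR → VR → Prop) (S : VS → VS → Prop) : Prop :=
  ∀ (V : Type) [Finite V] [Nonempty V] (A : V → V → Prop), D' V A →
    ∃ ρ : HomSet A R → HomSet A S, Function.Injective ρ ∧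
      ∀ (ξ : HomSet A R) (v : V), GammaComp A (ρ ξ).1 v = GammaComp A ξ.1 v

/-- The class `T_a`: digraphs whose loop-removed digraph is acyclic,
i.e. every closed walk is trivial. -/
def Ta {V : Type} (A : V → V → Prop) : Prop :=
  ∀ (z : ℕ → V) (I : ℕ), 0 < I →
    (∀ i < I, A (z i) (z (i + 1)) ∧ z i ≠ z (i + 1)) → z 0 ≠ z I

/-- A poset: a reflexive, antisymmetric, transitive digraph. -/
def IsPosetRel {V : Type} (A : V → V → Prop) : Prop :=
  Reflexive A ∧ AntiSymmetric A ∧ Transitive A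

/-- An element of `P^*`: an irreflexive, antisymmetric, transitive digraph. -/
def IsStrictPosetRel {V : Type} (A : V → V → Prop) : Prop :=
  Irreflexive A ∧ AntiSymmetric A ∧ Transitive A

/-- The direct (disjoint) sum of two digraphs. -/
def sumRel {V W : Type} (A : V → V → Prop) (B : W → W → Prop) :
    V ⊕ W → V ⊕ W → Prop
  | Sum.inl v, Sum.inl w => A v w
  | Sum.inr v, Sum.inr w => B v w
  | _, _ => False

/-- The open neighborhood `N(v)`. -/
def Nbr {Z : Type} (A : Z → Z → Prop) (v : Z) : Set Z :=
  {w | w ≠ v ∧ (A v w ∨ A w v)}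

/-- The in-neighborhood `N^in(v)`. -/
def NIn {Z : Type} (A : Z → Z → Prop) (v : Z) : Set Z :=
  {w | w ≠ v ∧ A w v}

/-- The out-neighborhood `N^out(v)`. -/
def NOut {Z : Type} (A : Z → Z → Prop) (v : Z) : Set Z :=
  {w | w ≠ v ∧ A v w}

/-- `A_r`: the arcs of `R` minus all arcs between `M` and `X`. -/
def ArRel {Z : Type} (A : Z → Z → Prop) (X M : Set Z) : Z → Z → Prop :=
  fun v w => A v w ∧ ¬(v ∈ M ∧ w ∈ X) ∧ ¬(v ∈ X ∧ w ∈ M)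

/-- `A_d = { m β(x) : m x ∈ A(R) ∩ (M × X) }`. -/
def AdRel {Z : Type} (A : Z → Z → Prop) (X M : Set Z) (β : Z → Z) : Z → Z → Prop :=
  fun v w => v ∈ M ∧ ∃ x ∈ X, A v x ∧ w = β x

/-- `A_u = { β(x) m : x m ∈ A(R) ∩ (X × M) }`. -/
def AuRel {Z : Type} (A : Z → Z → Prop) (X M : Set Z) (β : Z → Z) : Z → Z → Prop :=
  fun v w => w ∈ M ∧ ∃ x ∈ X, A x w ∧ v = β x

/-- The rearranged digraph `S`, with `A(S) = A_r ∪ A_d ∪ A_u`. -/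
def SRel {Z : Type} (A : Z → Z → Prop) (X M : Set Z) (β : Z → Z) : Z → Z → Prop :=
  fun v w => ArRel A X M v w ∨ AdRel A X M β v w ∨ AuRel A X M β v w

/-- `U_ξ = { v : ξ(v) ∈ T and ξ[N_G(v)] ∩ M ≠ ∅ }` (for `T = X`; with `T = Y`
this gives `U'_ζ`). -/
def USet {V Z : Type} (AG : V → V → Prop) (T M : Set Z) (ξ : V → Z) : Set V :=
  {v | ξ v ∈ T ∧ ∃ w ∈ Nbr AG v, ξ w ∈ M}

open Classical in
/-- The rearranged homomorphism `ρ_G(ξ)`: `β(ξ(v))` on `U_ξ` and `ξ(v)` elsewhere. -/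
noncomputable def rhoMap {V Z : Type} (AG : V → V → Prop) (X M : Set Z) (β : Z → Z)
    (ξ : V → Z) : V → Z :=
  fun v => if v ∈ USet AG X M ξ then β (ξ v) else ξ v

/-! ### Auxiliary lemmas -/

lemma connIn_refl {V : Type} {A : V → V → Prop} {X : Set V} {v : V} (hv : v ∈ X) :
    ConnIn A X v v :=
  ⟨0, fun _ => v, rfl, rfl, fun _ _ => hv, fun i hi => absurd hi (Nat.not_lt_zero i)⟩

lemma connIn_symm {V : Type} {A : V → V → Prop} {X : Set V} {v w : V}
    (h : ConnIn A X v w) : ConnIn A X w v := by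
  obtain ⟨I, z, h0, hI, hX, hAdj⟩ := h
  refine ⟨I, fun i => z (I - i), by simp [hI], by simp [h0], fun i _ => hX _ (Nat.sub_le _ _),
    fun i hi => ?_⟩
  show DAdj A (z (I - i)) (z (I - (i + 1)))
  have h1 : I - i = (I - (i + 1)) + 1 := by omega
  rw [h1]
  exact (hAdj (I - (i + 1)) (by omega)).elim Or.inr Or.inl

lemma connIn_trans {V : Type} {A : V → V → Prop} {X : Set V} {u v w : V}
    (h1 : ConnIn A X u v) (h2 : ConnIn A X v w) : ConnIn A X u w := by
  obtain ⟨I, z, hz0, hzI, hzX, hzA⟩ := h1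
  obtain ⟨J, y, hy0, hyJ, hyX, hyA⟩ := h2
  refine ⟨I + J, fun i => if i < I then z i else y (i - I), ?_, ?_, ?_, ?_⟩
  · by_cases h : 0 < I
    · simp [h, hz0]
    · have hI0 : I = 0 := by omega
      have huv : u = v := by rw [← hz0, ← hzI, hI0]
      simp [hI0, hy0, huv]
  · show (if I + J < I then z (I + J) else y (I + J - I)) = w
    rw [if_neg (by omega)]
    have : I + J - I = J := by omega
    rw [this]; exact hyJ
  · intro i _
    show (if i < I then z i else y (i - I)) ∈ X
    by_cases h : i < I
    · rw [if_pos h]; exact hzX i (le_of_lt h)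
    · rw [if_neg h]; exact hyX (i - I) (by omega)
  · intro i hi
    show DAdj A (if i < I then z i else y (i - I))
      (if i + 1 < I then z (i + 1) else y (i + 1 - I))
    by_cases h1' : i + 1 < I
    · rw [if_pos (by omega : i < I), if_pos h1']
      exact hzA i (by omega)
    · by_cases h2' : i < I
      · have hIe : i + 1 = I := by omega
        rw [if_pos h2', if_neg (by omega)]
        have hy : y (i + 1 - I) = z (i + 1) := by
          have h0' : i + 1 - I = 0 := by omega
          rw [h0', hy0, ← hzI, hIe]
        rw [hy]
        exact hzA i h2'
      · rw [if_neg h2', if_neg (by omega)]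
        have e1 : i + 1 - I = (i - I) + 1 := by omega
        rw [e1]
        exact hyA (i - I) (by omega)

lemma mem_gammaComp_self {V W : Type} (A : V → V → Prop) (ζ : V → W) (v : V) :
    v ∈ GammaComp A ζ v :=
  connIn_refl rfl

lemma gammaComp_eq_of_mem {V W : Type} {A : V → V → Prop} {ζ : V → W} {v w : V}
    (h : w ∈ GammaComp A ζ v) : GammaComp A ζ w = GammaComp A ζ v := by
  have h' : ConnIn A {u | ζ u = ζ v} v w := h
  have hX : ζ w = ζ v := by
    obtain ⟨I, z, h0, hI, hmem, _⟩ := h'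
    have := hmem I le_rfl
    rw [hI] at this; exact this
  have hXeq : {u | ζ u = ζ w} = {u | ζ u = ζ v} := by
    ext u; simp only [Set.mem_setOf_eq, hX]
  have key : GammaComp A ζ w = gammaSet A {u | ζ u = ζ v} w := by
    unfold GammaComp; rw [hXeq]
  rw [key]
  ext u
  simp only [gammaSet, GammaComp, Set.mem_setOf_eq]
  exact ⟨fun hu => connIn_trans h' hu, fun hu => connIn_trans (connIn_symm h') hu⟩

/-- The pattern (vertex set of `G_ζ`) of a map. -/
def PatOf {V W : Type} (A : V → V → Prop) (ζ : V → W) : Set (Set V) :=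
  {C | ∃ v, C = GammaComp A ζ v}

lemma gammaComp_eq_of_patOf {V W W' : Type} {A : V → V → Prop} {ζ : V → W'} {ξ : V → W}
    (h : PatOf A ζ = PatOf A ξ) (v : V) : GammaComp A ζ v = GammaComp A ξ v := by
  have hmemP : GammaComp A ξ v ∈ PatOf A ζ := by
    rw [h]; exact ⟨v, rfl⟩
  obtain ⟨w, hw⟩ := hmemP
  have hv : v ∈ GammaComp A ζ w := by rw [← hw]; exact mem_gammaComp_self A ξ v
  rw [gammaComp_eq_of_mem hv, ← hw]

lemma patOf_eq_of_forall {V W W' : Type} {A : V → V → Prop} {ζ : V → W'} {ξ : V → W}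
    (h : ∀ v, GammaComp A ζ v = GammaComp A ξ v) : PatOf A ζ = PatOf A ξ := by
  ext C
  constructor
  · rintro ⟨v, rfl⟩; exact ⟨v, h v⟩
  · rintro ⟨v, rfl⟩; exact ⟨v, (h v).symm⟩

lemma mem_thetaSet_iff {V W W' : Type} {A : V → V → Prop} {B' : W' → W' → Prop}
    {ξ : V → W} {ζ : V → W'} :
    ζ ∈ ThetaSet A B' ξ ↔ IsHom A B' ζ ∧ PatOf A ζ = PatOf A ξ :=
  Iff.rfl

instance {V W : Type} [Finite V] [Finite W] (A : V → V → Prop) (B : W → W → Prop) :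
    Finite (HomSet A B) :=
  Subtype.finite

/-- Fibers of the pattern map are in bijection with `Θ`-sets. -/
def fiberEquivTheta {V W W' : Type} (A : V → V → Prop) (B : W' → W' → Prop)
    (P : Set (Set V)) (ξ0 : V → W) (hξ0 : PatOf A ξ0 = P) :
    {ξ : HomSet A B // PatOf A ξ.1 = P} ≃ ↥(ThetaSet A B ξ0) where
  toFun x := ⟨x.1.1, x.1.2, show PatOf A x.1.1 = PatOf A ξ0 by rw [hξ0]; exact x.2⟩
  invFun y := ⟨⟨y.1, y.2.1⟩, by rw [show PatOf A y.1 = PatOf A ξ0 from y.2.2, hξ0]⟩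
  left_inv x := rfl
  right_inv y := rfl

/-- `R ⊑_Γ S` with respect to a class `D'` of finite digraphs iff
`#Θ_{G,R}(ξ) ≤ #Θ_{G,S}(ξ)` for every `G ∈ D'` and `ξ ∈ H(G,R)`. -/
theorem stmt4 {VR VS : Type} [Finite VR] [Nonempty VR] [Finite VS] [Nonempty VS]
    (R : VR → VR → Prop) (S : VS → VS → Prop)
    (D' : (V : Type) → (V → V → Prop) → Prop) :
    SqGamma D' R S ↔
      ∀ (V : Type) [Finite V] [Nonempty V] (A : V → V → Prop), D' V A →
        ∀ ξ : V → VR, IsHom A R ξ →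
          Nat.card ↥(ThetaSet A R ξ) ≤ Nat.card ↥(ThetaSet A S ξ) := by
  classical
  constructor
  · -- strong Γ-scheme implies the cardinality bounds
    intro hS V _ _ A hD ξ hξ
    obtain ⟨ρ, hinj, hΓ⟩ := hS V A hD
    have hmap : ∀ ζ : ↥(ThetaSet A R ξ), (ρ ⟨ζ.1, ζ.2.1⟩).1 ∈ ThetaSet A S ξ := by
      intro ζ
      refine mem_thetaSet_iff.mpr ⟨(ρ ⟨ζ.1, ζ.2.1⟩).2, ?_⟩
      have h1 : PatOf A (ρ ⟨ζ.1, ζ.2.1⟩).1 = PatOf A ζ.1 :=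
        patOf_eq_of_forall (hΓ ⟨ζ.1, ζ.2.1⟩)
      have h2 : PatOf A ζ.1 = PatOf A ξ := (mem_thetaSet_iff.mp ζ.2).2
      rw [h1, h2]
    have hF : Function.Injective
        (fun ζ : ↥(ThetaSet A R ξ) =>
          (⟨(ρ ⟨ζ.1, ζ.2.1⟩).1, hmap ζ⟩ : ↥(ThetaSet A S ξ))) := by
      intro ζ1 ζ2 hEq
      have hv : (ρ ⟨ζ1.1, ζ1.2.1⟩).1 = (ρ ⟨ζ2.1, ζ2.2.1⟩).1 :=
        congrArg (fun x : ↥(ThetaSet A S ξ) => x.1) hEq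
      have h2 : (⟨ζ1.1, ζ1.2.1⟩ : HomSet A R) = ⟨ζ2.1, ζ2.2.1⟩ :=
        hinj (Subtype.ext hv)
      have h3 : ζ1.1 = ζ2.1 := congrArg (fun x : HomSet A R => x.1) h2
      exact Subtype.ext h3
    exact Nat.card_le_card_of_injective _ hF
  · -- the cardinality bounds imply a strong Γ-scheme
    intro h V _ _ A hD
    have key : ∀ P : Set (Set V),
        Nonempty ({ξ : HomSet A R // PatOf A ξ.1 = P} ↪ {ζ : HomSet A S // PatOf A ζ.1 = P}) := by
      intro P
      by_cases hne : Nonempty {ξ : HomSet A R // PatOf A ξ.1 = P}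
      · obtain ⟨⟨ξ0, hξ0⟩⟩ := hne
        have hcard : Nat.card {ξ : HomSet A R // PatOf A ξ.1 = P}
            ≤ Nat.card {ζ : HomSet A S // PatOf A ζ.1 = P} := by
          rw [Nat.card_congr (fiberEquivTheta A R P ξ0.1 hξ0),
            Nat.card_congr (fiberEquivTheta A S P ξ0.1 hξ0)]
          exact h V A hD ξ0.1 ξ0.2
        haveI : Fintype {ξ : HomSet A R // PatOf A ξ.1 = P} := Fintype.ofFinite _
        haveI : Fintype {ζ : HomSet A S // PatOf A ζ.1 = P} := Fintype.ofFinite _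
        rw [Nat.card_eq_fintype_card, Nat.card_eq_fintype_card] at hcard
        exact Function.Embedding.nonempty_of_card_le hcard
      · haveI := not_nonempty_iff.mp hne
        exact ⟨Function.Embedding.ofIsEmpty⟩
    let F : ∀ P : Set (Set V),
        {ξ : HomSet A R // PatOf A ξ.1 = P} ↪ {ζ : HomSet A S // PatOf A ζ.1 = P} :=
      fun P => (key P).some
    let e1 := Equiv.sigmaFiberEquiv (fun ξ : HomSet A R => PatOf A ξ.1)
    let e2 := Equiv.sigmaFiberEquiv (fun ζ : HomSet A S => PatOf A ζ.1)
    refine ⟨fun ξ => e2 (Sigma.map id (fun P x => F P x) (e1.symm ξ)), ?_, ?_⟩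
    · have hsig : Function.Injective
          (Sigma.map (β₂ := fun P => {ζ : HomSet A S // PatOf A ζ.1 = P}) (@id (Set (Set V)))
            (fun P (x : {ξ : HomSet A R // PatOf A ξ.1 = P}) => F P x)) := by
        rintro ⟨P1, x1⟩ ⟨P2, x2⟩ hEq
        have hfst : P1 = P2 := congrArg Sigma.fst hEq
        subst hfst
        simp only [Sigma.map, id_eq] at hEq
        have hsnd : F P1 x1 = F P1 x2 := eq_of_heq (Sigma.mk.inj_iff.mp hEq).2
        exact congrArg (Sigma.mk P1) ((F P1).injective hsnd)
      exact fun a b hab => e1.symm.injective (hsig (e2.injective hab))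
    · intro ξ v
      have hmem : PatOf A ((F (PatOf A ξ.1) ⟨ξ, rfl⟩).1).1 = PatOf A ξ.1 :=
        (F (PatOf A ξ.1) ⟨ξ, rfl⟩).2
      exact gammaComp_eq_of_patOf hmem v
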